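/- (Gordon Brown's formula) Let $\mathfrak{g}$ be a complex semisimple Lie algebra with Cartan subalgebra $\mathfrak{h}$, root system $\Phi$ with a choice of positive roots $\Phi^+$, and let $\langle\cdot,\cdot\rangle$ denote the inner product on the real span of the roots induced by the Killing form. Then $2 \sum_{\theta \in \Phi^+} \langle\theta,\theta\rangle = \dim \mathfrak{h}$. -/

import Mathlib

open LieAlgebra LieModule

section Aux

variable {K V : Type*} [Field K] [AddCommGroup V] [Module K V] [FiniteDimensional K V]

lemma gb_trace_smulRight (f : V →ₗ[K] K) (v : V) :
    LinearMap.trace K V (f.smulRight v) = f v := by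
  have h : f.smulRight v = (LinearMap.toSpanSingleton K V v) ∘ₗ f := by
    ext x; simp
  rw [h, LinearMap.trace_comp_comm']
  have h2 : f ∘ₗ LinearMap.toSpanSingleton K V v = f v • LinearMap.id := by
    ext; simp [mul_comm]
  rw [h2, map_smul, LinearMap.trace_id]
  simp

end Aux

/-- Gordon Brown's formula: Let `𝔤 = L` be a complex semisimple Lie algebra
(equivalently, finite-dimensional with nondegenerate Killing form), `𝔥 = H` a Cartan
subalgebra, `Φ⁺` a choice of positive roots (so that `Φ⁺ ⊔ -Φ⁺` is the set of roots), and let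
`B` be the bilinear form on `𝔥*` induced via duality by the Killing form of `𝔤`.  Then
`2 ∑_{θ ∈ Φ⁺} B(θ,θ) = dim 𝔥`. -/
theorem gordon_brown_formula
    {L : Type*} [LieRing L] [LieAlgebra ℂ L] [Module.Finite ℂ L] [LieAlgebra.IsKilling ℂ L]
    (H : LieSubalgebra ℂ L) [H.IsCartanSubalgebra]
    (Φplus : Finset (Module.Dual ℂ H))
    -- `Φ⁺ ∪ (-Φ⁺)` is exactly the set of (nonzero) roots of `𝔤` w.r.t. `𝔥`:
    (hroots : ∀ α : Module.Dual ℂ H,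
      ((α ∈ Φplus ∨ -α ∈ Φplus) ↔ (α ≠ 0 ∧ rootSpace H (α : H → ℂ) ≠ ⊥)))
    (hdisj : ∀ α ∈ Φplus, -α ∉ Φplus)
    -- `B` is the form on `𝔥*` induced by the Killing form via the duality `𝔥 ≃ 𝔥*`:
    (B : Module.Dual ℂ H → Module.Dual ℂ H → ℂ)
    (hB : ∀ f g : Module.Dual ℂ H,
      B f g = traceForm ℂ H L ((LieAlgebra.IsKilling.cartanEquivDual H).symm f)
        ((LieAlgebra.IsKilling.cartanEquivDual H).symm g)) :
    2 * ∑ θ ∈ Φplus, B θ θ = (Module.finrank ℂ H : ℂ) := by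
  classical
  set t : Module.Dual ℂ H → H := fun f => (LieAlgebra.IsKilling.cartanEquivDual H).symm f with ht
  -- The trace form evaluated against `t f` recovers `f`.
  have htf : ∀ (f : Module.Dual ℂ H) (y : H), traceForm ℂ H L (t f) y = f y := by
    intro f y
    conv_rhs => rw [← (LieAlgebra.IsKilling.cartanEquivDual H).apply_symm_apply f]
    rfl
  have hB' : ∀ f g : Module.Dual ℂ H, B f g = f (t g) := fun f g => by
    rw [hB]; exact htf f (t g)
  -- The trace form as a sum over roots.
  have key : ∀ x y : H, traceForm ℂ H L x y
      = ∑ α ∈ H.root, (α : H →ₗ[ℂ] ℂ) x * (α : H →ₗ[ℂ] ℂ) y := by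
    intro x y
    have h := LieAlgebra.IsKilling.restrict_killingForm_eq_sum (K := ℂ) (L := L) (H := H)
    rw [LieAlgebra.restrict_killingForm] at h
    rw [h]
    simp
  -- The sum of rank-one maps `α(⬝) • t α` over roots is the identity.
  set S : H →ₗ[ℂ] H :=
    ∑ α ∈ H.root, ((α : H →ₗ[ℂ] ℂ)).smulRight (t (α : H →ₗ[ℂ] ℂ)) with hSdef
  have hS : S = LinearMap.id := by
    refine LinearMap.ext fun x => ?_
    have hzero : ∀ y : H, traceForm ℂ H L (S x - x) y = 0 := by
      intro y
      have h1 : traceForm ℂ H L (S x) y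
          = ∑ α ∈ H.root, (α : H →ₗ[ℂ] ℂ) x * (α : H →ₗ[ℂ] ℂ) y := by
        rw [hSdef]
        simp only [LinearMap.sum_apply, LinearMap.smulRight_apply, map_sum, map_smul]
        refine Finset.sum_congr rfl fun α _ => ?_
        rw [LinearMap.smul_apply, htf]
        simp [smul_eq_mul]
      have h2 : traceForm ℂ H L (S x - x) y
          = traceForm ℂ H L (S x) y - traceForm ℂ H L x y := by
        simp [map_sub]
      rw [h2, h1, key x y, sub_self]
    have := LieAlgebra.IsKilling.traceForm_cartan_nondegenerate ℂ L H |>.1 _ hzero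
    simpa [sub_eq_zero] using this
  -- Taking traces: `dim H = ∑_{α ∈ roots} α (t α)`.
  have htrace : (Module.finrank ℂ H : ℂ)
      = ∑ α ∈ H.root, (α : H →ₗ[ℂ] ℂ) (t (α : H →ₗ[ℂ] ℂ)) := by
    have : LinearMap.trace ℂ H S = ∑ α ∈ H.root, (α : H →ₗ[ℂ] ℂ) (t (α : H →ₗ[ℂ] ℂ)) := by
      rw [hSdef, map_sum]
      exact Finset.sum_congr rfl fun α _ => gb_trace_smulRight _ _
    rw [← this, hS, LinearMap.trace_id]
  -- Identify the image of the set of roots with `Φplus ∪ -Φplus`.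
  set Φ : Finset (Module.Dual ℂ H) := Φplus ∪ Φplus.image (fun θ => -θ) with hΦdef
  have himg : Finset.image (fun (α : Weight ℂ H L) => (α : H →ₗ[ℂ] ℂ)) H.root = Φ := by
    ext θ
    simp only [Finset.mem_image, hΦdef, Finset.mem_union]
    constructor
    · rintro ⟨α, hα, rfl⟩
      have hα' : α.IsNonZero := by simpa [LieSubalgebra.root] using hα
      have h1 : (α : H →ₗ[ℂ] ℂ) ≠ 0 := Weight.coe_toLinear_ne_zero_iff.mpr hα'
      have h2 : rootSpace H ((α : H →ₗ[ℂ] ℂ) : H → ℂ) ≠ ⊥ := by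
        simpa using α.genWeightSpace_ne_bot
      rcases (hroots _).mpr ⟨h1, h2⟩ with h | h
      · exact Or.inl h
      · exact Or.inr ⟨-(α : H →ₗ[ℂ] ℂ), h, by simp⟩
    · intro hmem
      have hor : θ ∈ Φplus ∨ -θ ∈ Φplus := by
        rcases hmem with h | ⟨σ, hσ, rfl⟩
        · exact Or.inl h
        · exact Or.inr (by simpa using hσ)
      obtain ⟨hne, hrs⟩ := (hroots θ).mp hor
      refine ⟨⟨(θ : H → ℂ), hrs⟩, ?_, ?_⟩
      · have : (⟨(θ : H → ℂ), hrs⟩ : Weight ℂ H L).IsNonZero := by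
          intro hz
          exact hne (by ext x; exact congrFun hz x)
        simpa [LieSubalgebra.root] using this
      · ext x; rfl
  have hinj : ∀ α ∈ H.root, ∀ β ∈ H.root,
      ((α : Weight ℂ H L) : H →ₗ[ℂ] ℂ) = (β : H →ₗ[ℂ] ℂ) → α = β := by
    intro α _ β _ h
    exact Weight.ext fun x => LinearMap.congr_fun h x
  have hsum : ∑ α ∈ H.root, (α : H →ₗ[ℂ] ℂ) (t (α : H →ₗ[ℂ] ℂ)) = ∑ θ ∈ Φ, θ (t θ) := by
    rw [← himg, Finset.sum_image hinj]
  -- Split the sum over `Φ` into the two halves.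
  have hdisjoint : Disjoint Φplus (Φplus.image (fun θ => -θ)) := by
    rw [Finset.disjoint_left]
    rintro θ h1 h2
    obtain ⟨σ, hσ, rfl⟩ := Finset.mem_image.mp h2
    exact hdisj _ h1 (by simpa using hσ)
  have hsplit : ∑ θ ∈ Φ, θ (t θ) = 2 * ∑ θ ∈ Φplus, θ (t θ) := by
    rw [hΦdef, Finset.sum_union hdisjoint]
    have hnegsum : ∑ θ ∈ Φplus.image (fun θ => -θ), θ (t θ) = ∑ θ ∈ Φplus, θ (t θ) := by
      rw [Finset.sum_image (by intro a _ b _ h; simpa using h)]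
      refine Finset.sum_congr rfl fun θ _ => ?_
      have : t (-θ) = -(t θ) := by simp [ht]
      rw [this]
      simp
    rw [hnegsum]; ring
  have hBsum : ∑ θ ∈ Φplus, B θ θ = ∑ θ ∈ Φplus, θ (t θ) :=
    Finset.sum_congr rfl fun θ _ => hB' θ θ
  rw [hBsum, htrace, hsum, hsplit]
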